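/- Let 𝔭 : ℝ → ℍ be a differentiable quaternion-valued function with |𝔭(t)| = 1 for all t, write 𝔭 = [p, q], and let r ∈ ℝ³ be a fixed vector. Define R(t) ∈ ℝ³ as the imaginary part of 𝔭(t) ⋆ [0, r] ⋆ 𝔭(t)*, and define the angular frequency Ω₀(t) := 2(−ṗ q + q̇ p − q̇ × q). Then R is differentiable and satisfies the rigid-body rotation equation Ṙ(t) = Ω₀(t) × R(t) for all t. -/

import Mathlib

open scoped BigOperators

noncomputable section

/-- The quaternion `[p, q]` with real part `p` and imaginary (vector) part `q ∈ ℝ³`. -/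
noncomputable def quat (p : ℝ) (q : Fin 3 → ℝ) : Quaternion ℝ := ⟨p, q 0, q 1, q 2⟩

/-- Euclidean dot product on `ℝ³`. -/
noncomputable def dot3 (a b : Fin 3 → ℝ) : ℝ := ∑ i, a i * b i

/-- Euclidean norm on `ℝ³`. -/
noncomputable def norm3 (a : Fin 3 → ℝ) : ℝ := Real.sqrt (∑ i, a i ^ 2)

/-- Cross product on `ℝ³`. -/
noncomputable def cross3 (a b : Fin 3 → ℝ) : Fin 3 → ℝ := crossProduct a b

/-- The imaginary (vector) part of a quaternion, as a vector in `ℝ³`. -/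
noncomputable def vecPart (a : Quaternion ℝ) : Fin 3 → ℝ := ![a.imI, a.imJ, a.imK]

/-- The angular frequency `Ω₀ := 2(−ṗ q + q̇ p − q̇ × q)` of a differentiable
quaternion curve `𝔭 = [p, q]`. -/
noncomputable def Ω₀ (𝔭 : ℝ → Quaternion ℝ) (t : ℝ) : Fin 3 → ℝ :=
  (2 : ℝ) • (-(deriv (fun s => (𝔭 s).re) t) • vecPart (𝔭 t)
    + (𝔭 t).re • deriv (fun s => vecPart (𝔭 s)) t
    - cross3 (deriv (fun s => vecPart (𝔭 s)) t) (vecPart (𝔭 t)))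

private lemma hasDerivAt_lm (L : Quaternion ℝ →ₗ[ℝ] ℝ) {f : ℝ → Quaternion ℝ}
    {f' : Quaternion ℝ} {t : ℝ} (hf : HasDerivAt f f' t) :
    HasDerivAt (fun s => L (f s)) (L f') t := by
  exact ((LinearMap.toContinuousLinearMap L).hasFDerivAt (x := f t)).comp_hasDerivAt t hf

private lemma hasDerivAt_vecPart {f : ℝ → Quaternion ℝ} {f' : Quaternion ℝ} {t : ℝ}
    (hf : HasDerivAt f f' t) :
    HasDerivAt (fun s => vecPart (f s)) (vecPart f') t := by
  rw [hasDerivAt_pi]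
  intro i
  fin_cases i
  · simpa [vecPart] using (show HasDerivAt (fun s => (f s).imI) f'.imI t from hasDerivAt_lm (QuaternionAlgebra.imIₗ (R := ℝ) (-1) 0 (-1)) hf)
  · simpa [vecPart] using (show HasDerivAt (fun s => (f s).imJ) f'.imJ t from hasDerivAt_lm (QuaternionAlgebra.imJₗ (R := ℝ) (-1) 0 (-1)) hf)
  · simpa [vecPart] using (show HasDerivAt (fun s => (f s).imK) f'.imK t from hasDerivAt_lm (QuaternionAlgebra.imKₗ (R := ℝ) (-1) 0 (-1)) hf)

private lemma hasDerivAt_star_q {f : ℝ → Quaternion ℝ} {f' : Quaternion ℝ} {t : ℝ}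
    (hf : HasDerivAt f f' t) :
    HasDerivAt (fun s => star (f s)) (star f') t := by
  have hre : HasDerivAt (fun s => (f s).re) (f'.re) t := by
    exact hasDerivAt_lm (QuaternionAlgebra.reₗ (R := ℝ) (-1) 0 (-1)) hf
  have hre2 : HasDerivAt (fun s => 2 * (f s).re) (2 * f'.re) t := hre.const_mul 2
  have hcoe : HasDerivAt (fun s => ((2 * (f s).re : ℝ) : Quaternion ℝ))
      ((2 * f'.re : ℝ) : Quaternion ℝ) t := by
    have hL := ((Algebra.linearMap ℝ (Quaternion ℝ)).toContinuousLinearMap.hasFDerivAt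
      (x := 2 * (f t).re)).comp_hasDerivAt t hre2
    simpa [Function.comp_def] using hL
  have h2 := hcoe.sub hf
  have hfun : (fun s => ((2 * (f s).re : ℝ) : Quaternion ℝ) - f s) = fun s => star (f s) := by
    funext s
    exact (Quaternion.star_eq_two_re_sub (f s)).symm
  rw [show ((fun s => ((2 * (f s).re : ℝ) : Quaternion ℝ)) - f) = fun s => ((2 * (f s).re : ℝ) : Quaternion ℝ) - f s from rfl, hfun, ← Quaternion.star_eq_two_re_sub] at h2
  exact h2

private lemma quat_re' (p : ℝ) (q : Fin 3 → ℝ) : (quat p q).re = p := rfl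
private lemma quat_imI' (p : ℝ) (q : Fin 3 → ℝ) : (quat p q).imI = q 0 := rfl
private lemma quat_imJ' (p : ℝ) (q : Fin 3 → ℝ) : (quat p q).imJ = q 1 := rfl
private lemma quat_imK' (p : ℝ) (q : Fin 3 → ℝ) : (quat p q).imK = q 2 := rfl

/-- **Rigid-body rotation equation.** For a differentiable unit-quaternion curve `𝔭`
and a fixed vector `r`, the vector `R(t) := Im(𝔭(t) ⋆ [0, r] ⋆ 𝔭(t)*)` is
differentiable with `Ṙ = Ω₀ × R`. -/
theorem rigid_body_rotation
    (𝔭 : ℝ → Quaternion ℝ) (hdiff : Differentiable ℝ 𝔭)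
    (hunit : ∀ t, Quaternion.normSq (𝔭 t) = 1) (r : Fin 3 → ℝ) (t : ℝ) :
    HasDerivAt (fun s => vecPart (𝔭 s * quat 0 r * star (𝔭 s)))
      (cross3 (Ω₀ 𝔭 t) (vecPart (𝔭 t * quat 0 r * star (𝔭 t)))) t := by
  have hp : HasDerivAt 𝔭 (deriv 𝔭 t) t := (hdiff t).hasDerivAt
  have h1 : HasDerivAt (fun s => 𝔭 s * quat 0 r) (deriv 𝔭 t * quat 0 r) t :=
    hp.mul_const (quat 0 r)
  have hprod : HasDerivAt (fun s => 𝔭 s * quat 0 r * star (𝔭 s))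
      (deriv 𝔭 t * quat 0 r * star (𝔭 t) + 𝔭 t * quat 0 r * star (deriv 𝔭 t)) t :=
    h1.mul (hasDerivAt_star_q hp)
  -- orthogonality coming from the unit-norm condition
  have hc : HasDerivAt (fun s => ((𝔭 s) * star (𝔭 s)).re)
      ((deriv 𝔭 t * star (𝔭 t)).re + (𝔭 t * star (deriv 𝔭 t)).re) t := by
    exact
      hasDerivAt_lm (QuaternionAlgebra.reₗ (R := ℝ) (-1) 0 (-1))
        (hp.mul (hasDerivAt_star_q hp))
  have hfun : (fun s => ((𝔭 s) * star (𝔭 s)).re) = fun _ => (1 : ℝ) := by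
    funext s
    rw [← Quaternion.normSq_def, hunit s]
  rw [hfun] at hc
  have h0 : (deriv 𝔭 t * star (𝔭 t)).re + (𝔭 t * star (deriv 𝔭 t)).re = 0 :=
    hc.unique (hasDerivAt_const t 1)
  have horth : (𝔭 t).re * (deriv 𝔭 t).re + (𝔭 t).imI * (deriv 𝔭 t).imI
      + (𝔭 t).imJ * (deriv 𝔭 t).imJ + (𝔭 t).imK * (deriv 𝔭 t).imK = 0 := by
    simp only [Quaternion.re_mul, Quaternion.re_star, Quaternion.imI_star,
      Quaternion.imJ_star, Quaternion.imK_star] at h0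
    linarith
  have hsq : (𝔭 t).re ^ 2 + (𝔭 t).imI ^ 2 + (𝔭 t).imJ ^ 2 + (𝔭 t).imK ^ 2 = 1 := by
    have := hunit t
    rwa [Quaternion.normSq_def'] at this
  have hre : deriv (fun s => (𝔭 s).re) t = (deriv 𝔭 t).re := by
    have := hasDerivAt_lm (QuaternionAlgebra.reₗ (R := ℝ) (-1) 0 (-1)) hp
    exact this.deriv
  have hvd : deriv (fun s => vecPart (𝔭 s)) t = vecPart (deriv 𝔭 t) :=
    (hasDerivAt_vecPart hp).deriv
  have key : vecPart (deriv 𝔭 t * quat 0 r * star (𝔭 t) + 𝔭 t * quat 0 r * star (deriv 𝔭 t))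
      = cross3 (Ω₀ 𝔭 t) (vecPart (𝔭 t * quat 0 r * star (𝔭 t))) := by
    funext i
    simp only [Ω₀, hre, hvd]
    fin_cases i <;>
      simp [cross3, crossProduct, vecPart, quat_re', quat_imI', quat_imJ', quat_imK',
        Quaternion.imI_add, Quaternion.imJ_add, Quaternion.imK_add,
        Quaternion.imI_mul, Quaternion.imJ_mul, Quaternion.imK_mul,
        Quaternion.re_mul, Quaternion.re_star, Quaternion.imI_star,
        Quaternion.imJ_star, Quaternion.imK_star]
    · linear_combination (2 * r 0 + (-4) * (𝔭 t).imK * (𝔭 t).imK * r 0 + (-4) * (𝔭 t).imJ * (𝔭 t).imJ * r 0 + 4 * (𝔭 t).imI * (𝔭 t).imK * r 2 + 4 * (𝔭 t).imI * (𝔭 t).imJ * r 1 + (-4) * (𝔭 t).re * (𝔭 t).imK * r 1 + 4 * (𝔭 t).re * (𝔭 t).imJ * r 2) * horth +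
        (4 * (𝔭 t).imK * (deriv 𝔭 t).imK * r 0 + (-2) * (𝔭 t).imK * (deriv 𝔭 t).imI * r 2 + 2 * (𝔭 t).imK * (deriv 𝔭 t).re * r 1 + 4 * (𝔭 t).imJ * (deriv 𝔭 t).imJ * r 0 + (-2) * (𝔭 t).imJ * (deriv 𝔭 t).imI * r 1 + (-2) * (𝔭 t).imJ * (deriv 𝔭 t).re * r 2 + (-2) * (𝔭 t).imI * (deriv 𝔭 t).imK * r 2 + (-2) * (𝔭 t).imI * (deriv 𝔭 t).imJ * r 1 + 2 * (𝔭 t).re * (deriv 𝔭 t).imK * r 1 + (-2) * (𝔭 t).re * (deriv 𝔭 t).imJ * r 2) * hsq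
    · linear_combination (2 * r 1 + (-4) * (𝔭 t).imK * (𝔭 t).imK * r 1 + 4 * (𝔭 t).imJ * (𝔭 t).imK * r 2 + 4 * (𝔭 t).imI * (𝔭 t).imJ * r 0 + (-4) * (𝔭 t).imI * (𝔭 t).imI * r 1 + 4 * (𝔭 t).re * (𝔭 t).imK * r 0 + (-4) * (𝔭 t).re * (𝔭 t).imI * r 2) * horth +
        (4 * (𝔭 t).imK * (deriv 𝔭 t).imK * r 1 + (-2) * (𝔭 t).imK * (deriv 𝔭 t).imJ * r 2 + (-2) * (𝔭 t).imK * (deriv 𝔭 t).re * r 0 + (-2) * (𝔭 t).imJ * (deriv 𝔭 t).imK * r 2 + (-2) * (𝔭 t).imJ * (deriv 𝔭 t).imI * r 0 + (-2) * (𝔭 t).imI * (deriv 𝔭 t).imJ * r 0 + 4 * (𝔭 t).imI * (deriv 𝔭 t).imI * r 1 + 2 * (𝔭 t).imI * (deriv 𝔭 t).re * r 2 + (-2) * (𝔭 t).re * (deriv 𝔭 t).imK * r 0 + 2 * (𝔭 t).re * (deriv 𝔭 t).imI * r 2) * hsq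
    · linear_combination (2 * r 2 + 4 * (𝔭 t).imJ * (𝔭 t).imK * r 1 + (-4) * (𝔭 t).imJ * (𝔭 t).imJ * r 2 + 4 * (𝔭 t).imI * (𝔭 t).imK * r 0 + (-4) * (𝔭 t).imI * (𝔭 t).imI * r 2 + (-4) * (𝔭 t).re * (𝔭 t).imJ * r 0 + 4 * (𝔭 t).re * (𝔭 t).imI * r 1) * horth +
        ((-2) * (𝔭 t).imK * (deriv 𝔭 t).imJ * r 1 + (-2) * (𝔭 t).imK * (deriv 𝔭 t).imI * r 0 + (-2) * (𝔭 t).imJ * (deriv 𝔭 t).imK * r 1 + 4 * (𝔭 t).imJ * (deriv 𝔭 t).imJ * r 2 + 2 * (𝔭 t).imJ * (deriv 𝔭 t).re * r 0 + (-2) * (𝔭 t).imI * (deriv 𝔭 t).imK * r 0 + 4 * (𝔭 t).imI * (deriv 𝔭 t).imI * r 2 + (-2) * (𝔭 t).imI * (deriv 𝔭 t).re * r 1 + 2 * (𝔭 t).re * (deriv 𝔭 t).imJ * r 0 + (-2) * (𝔭 t).re * (deriv 𝔭 t).imI * r 1) * hsq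
  have hfinal := hasDerivAt_vecPart hprod
  rw [key] at hfinal
  exact hfinal
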